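/- Let G be a finite connected signed directed graph on n ≥ 4 vertices without self-loops such that every vertex has at most two neighbors, G is sign-symmetric, and G has exactly r ∈ {1,2} negative edges with all negative edges incident to a common pair of vertices {u, w} where u ≠ w. Then there exists a bijective labeling of the vertices by {1,...,n} with label(u) = 1 and label(w) = n such that every edge either connects consecutively labeled vertices with a + sign, or connects vertices labeled 1 and n with a - sign. -/

import Mathlib

/-- A signed directed graph on `Fin n`: `g u v = some true` means a `+` edge
from `u` to `v`, `g u v = some false` means a `-` edge from `u` to `v`, and
`g u v = none` means no edge. -/
def IsNeighbor {n : ℕ} (g : Fin n → Fin n → Option Bool) (u v : Fin n) : Prop :=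
  u ≠ v ∧ (g u v ≠ none ∨ g v u ≠ none)

/-- The underlying (undirected, unsigned) graph of a signed directed graph. -/
def underGraph {n : ℕ} (g : Fin n → Fin n → Option Bool) : SimpleGraph (Fin n) :=
  SimpleGraph.fromRel (fun u v => g u v ≠ none)

instance {n : ℕ} (g : Fin n → Fin n → Option Bool) (u v : Fin n) :
    Decidable (IsNeighbor g u v) := by unfold IsNeighbor; infer_instance


namespace Stmt8Aux

open Finset

variable {V : Type*} [Fintype V] [DecidableEq V]

section Chain

variable (A : V → V → Prop)

open Classical in
/-- next vertex of the forced walk: a neighbor of `c` other than `p`. -/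
noncomputable def nxt (p c : V) : Option V :=
  if h : ∃ x, A c x ∧ x ≠ p then some h.choose else none

lemma nxt_some {p c x : V} (h : nxt A p c = some x) : A c x ∧ x ≠ p := by
  unfold nxt at h
  classical
  by_cases h' : ∃ y, A c y ∧ y ≠ p
  · rw [dif_pos h'] at h
    injection h with h; subst h; exact h'.choose_spec
  · rw [dif_neg h'] at h; cases h

lemma nxt_none {p c : V} (h : nxt A p c = none) : ∀ x, A c x → x = p := by
  unfold nxt at h
  classical
  by_cases h' : ∃ y, A c y ∧ y ≠ p
  · rw [dif_pos h'] at h; cases h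
  · intro x hx; by_contra hne; exact h' ⟨x, hx, hne⟩

/-- the forced walk from `s`: state is (previous, current). -/
noncomputable def ch (s : V) : ℕ → Option (V × V)
  | 0 => some (s, s)
  | k+1 => (ch s k).bind fun pc => (nxt A pc.1 pc.2).map fun x => (pc.2, x)

lemma some_pair_eq {α : Type*} {p a q b : α} (h : (some (p, a) : Option (α × α)) = some (q, b)) :
    p = q ∧ a = b := by
  simp only [Option.some.injEq, Prod.mk.injEq] at h
  exact h

lemma ch_zero (s : V) : ch A s 0 = some (s, s) := rfl

lemma ch_succ_some {s : V} {k : ℕ} {p c : V} (h : ch A s (k+1) = some (p, c)) :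
    ∃ q, ch A s k = some (q, p) ∧ A p c ∧ c ≠ q := by
  unfold ch at h
  rcases hck : ch A s k with _ | ⟨q, p'⟩
  · rw [hck] at h; cases h
  · rw [hck] at h
    rcases hnx : nxt A q p' with _ | x
    · rw [show ((some (q, p')).bind fun pc => (nxt A pc.1 pc.2).map fun x => (pc.2, x)) = (nxt A q p').map fun x => (p', x) from rfl, hnx] at h
      cases h
    · rw [show ((some (q, p')).bind fun pc => (nxt A pc.1 pc.2).map fun x => (pc.2, x)) = (nxt A q p').map fun x => (p', x) from rfl, hnx] at h
      injection h with h
      have h1 : p' = p := congrArg Prod.fst h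
      have h2 : x = c := congrArg Prod.snd h
      subst h1; subst h2
      obtain ⟨hx1, hx2⟩ := nxt_some A hnx
      exact ⟨q, rfl, hx1, hx2⟩

lemma ch_succ_none {s : V} {k : ℕ} {p c : V} (h : ch A s k = some (p, c))
    (h2 : ch A s (k+1) = none) : ∀ x, A c x → x = p := by
  unfold ch at h2
  rw [h] at h2
  rcases hnx : nxt A p c with _ | x
  · exact nxt_none A hnx
  · rw [show ((some (p, c)).bind fun pc => (nxt A pc.1 pc.2).map fun x => (pc.2, x)) = (nxt A p c).map fun x => (c, x) from rfl, hnx] at h2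
    cases h2

lemma ch_none_succ {s : V} {k : ℕ} (h : ch A s k = none) : ch A s (k+1) = none := by
  unfold ch; rw [h]; rfl

lemma ch_isSome_mono {s : V} {k j : ℕ} (hjk : j ≤ k) (h : ch A s k ≠ none) :
    ch A s j ≠ none := by
  by_contra hj
  apply h
  clear h
  obtain ⟨d, rfl⟩ : ∃ d, k = j + d := ⟨k - j, by omega⟩
  induction d with
  | zero => exact hj
  | succ d ih => exact ch_none_succ A (ih (by omega))




section Key

variable {A : V → V → Prop} {s : V}
variable (hsym : ∀ a b, A a b → A b a) (hne : ∀ a b, A a b → a ≠ b)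
variable (hdeg : ∀ v x y z, A v x → A v y → A v z → x = y ∨ x = z ∨ y = z)
variable (hs : ∀ x y, A s x → A s y → x = y)

include hsym hne hdeg hs in
lemma chain_key : ∀ k i, i < k → ∀ p q a b, ch A s i = some (p, a) →
    ch A s k = some (q, b) → a ≠ b ∧ (A a b → i + 1 = k) := by
  intro k
  induction k using Nat.strong_induction_on with
  | _ k IH =>
    intro i hik p q a b hi hk
    obtain ⟨k, rfl⟩ : ∃ k', k = k' + 1 := ⟨k - 1, by omega⟩
    obtain ⟨q₂, hck, hAqb, hbq₂⟩ := ch_succ_some A hk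
    have hcksome : ch A s k ≠ none := by rw [hck]; exact fun hcon => by cases hcon
    -- every chain vertex with index ≤ k differs from b
    have fresh : ∀ i' ≤ k, ∀ p' a', ch A s i' = some (p', a') → a' ≠ b := by
      intro i' hi' p' a' h' heq
      subst heq
      rcases eq_or_lt_of_le hi' with rfl | hi'k
      · rw [hck] at h'
        exact hne _ _ hAqb (some_pair_eq h').2
      · rcases Nat.eq_zero_or_pos i' with rfl | hpos
        · -- a' = s
          rw [ch_zero] at h'
          obtain ⟨rfl, rfl⟩ := some_pair_eq h'
          -- there is a vertex at index 1
          have h1some : ch A s 1 ≠ none :=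
            ch_isSome_mono A (show 1 ≤ k by omega) hcksome
          obtain ⟨p1, c1, hc1⟩ : ∃ p1 c1, ch A s 1 = some (p1, c1) := by
            rcases hx : ch A s 1 with _ | ⟨p1, c1⟩
            · exact absurd hx h1some
            · exact ⟨p1, c1, rfl⟩
          obtain ⟨q0, hq0, hAsc1, hc1ne⟩ := ch_succ_some A hc1
          rw [ch_zero] at hq0
          obtain ⟨rfl, rfl⟩ := some_pair_eq hq0
          -- neighbors of s : c1 and q
          have hAsq : A s q := hsym _ _ hAqb
          by_cases hc1q : c1 = q
          · subst hc1q
            rcases eq_or_lt_of_le (show 1 ≤ k by omega) with h1k | h1k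
            · rw [← h1k] at hck
              rw [hck] at hc1
              exact hbq₂ (some_pair_eq hc1).1.symm
            · exact (IH k (by omega) 1 h1k _ _ _ _ hc1 hck).1 rfl
          · exact hc1q (hs _ _ hAsc1 hAsq)
        · -- 1 ≤ i' < k
          obtain ⟨i'', rfl⟩ : ∃ j, i' = j + 1 := ⟨i' - 1, by omega⟩
          obtain ⟨p0, hp0, hApa, hap0⟩ := ch_succ_some A h'
          -- vertex at index i'+1
          have hnext : ch A s (i'' + 1 + 1) ≠ none :=
            ch_isSome_mono A (show i'' + 1 + 1 ≤ k by omega) hcksome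
          obtain ⟨x, y, hxy⟩ : ∃ x y, ch A s (i'' + 1 + 1) = some (x, y) := by
            rcases hx : ch A s (i'' + 1 + 1) with _ | ⟨x, y⟩
            · exact absurd hx hnext
            · exact ⟨x, y, rfl⟩
          obtain ⟨q3, hq3, hAxy, hyq3⟩ := ch_succ_some A hxy
          rw [h'] at hq3
          obtain ⟨rfl, rfl⟩ := some_pair_eq hq3
          -- neighbors of a' : p' (the previous), y, q
          have hAap : A a' p' := hsym _ _ hApa
          have hAaq : A a' q := hsym _ _ hAqb
          have hpy : p' ≠ y :=
            (IH (i'' + 1 + 1) (by omega) i'' (by omega) _ _ _ _ hp0 hxy).1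
          have hpq : p' ≠ q := (IH k (by omega) i'' (by omega) _ _ _ _ hp0 hck).1
          have hyq : y ≠ q := by
            rcases eq_or_lt_of_le (show i'' + 1 + 1 ≤ k by omega) with h1k | h1k
            · exfalso
              rw [h1k, hck] at hxy
              exact hbq₂ (some_pair_eq hxy).1.symm
            · exact (IH k (by omega) (i'' + 1 + 1) h1k _ _ _ _ hxy hck).1
          rcases hdeg a' p' y q hAap hAxy hAaq with h | h | h
          · exact hpy h
          · exact hpq h
          · exact hyq h
    refine ⟨fresh i (by omega) p a hi, ?_⟩
    intro hAab
    by_contra hik'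
    have hik2 : i < k := by omega
    rcases Nat.eq_zero_or_pos i with rfl | hpos
    · -- a = s
      rw [ch_zero] at hi
      obtain ⟨rfl, rfl⟩ := some_pair_eq hi
      have h1some : ch A s 1 ≠ none :=
        ch_isSome_mono A (show 1 ≤ k by omega) hcksome
      obtain ⟨p1, c1, hc1⟩ : ∃ p1 c1, ch A s 1 = some (p1, c1) := by
        rcases hx : ch A s 1 with _ | ⟨p1, c1⟩
        · exact absurd hx h1some
        · exact ⟨p1, c1, rfl⟩
      obtain ⟨q0, hq0, hAsc1, hc1ne⟩ := ch_succ_some A hc1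
      rw [ch_zero] at hq0
      obtain ⟨rfl, rfl⟩ := some_pair_eq hq0
      have hc1b : c1 ≠ b := fresh 1 (by omega) _ _ hc1
      exact hc1b (hs _ _ hAsc1 hAab)
    · obtain ⟨i', rfl⟩ : ∃ j, i = j + 1 := ⟨i - 1, by omega⟩
      obtain ⟨p0, hp0, hApa, hap0⟩ := ch_succ_some A hi
      have hnext : ch A s (i' + 1 + 1) ≠ none :=
        ch_isSome_mono A (show i' + 1 + 1 ≤ k by omega) hcksome
      obtain ⟨x, y, hxy⟩ : ∃ x y, ch A s (i' + 1 + 1) = some (x, y) := by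
        rcases hx : ch A s (i' + 1 + 1) with _ | ⟨x, y⟩
        · exact absurd hx hnext
        · exact ⟨x, y, rfl⟩
      obtain ⟨q3, hq3, hAxy, hyq3⟩ := ch_succ_some A hxy
      rw [hi] at hq3
      obtain ⟨rfl, rfl⟩ := some_pair_eq hq3
      have hAap : A a p := hsym _ _ hApa
      have hpy : p ≠ y := (IH (i' + 1 + 1) (by omega) i' (by omega) _ _ _ _ hp0 hxy).1
      have hpb : p ≠ b := fresh i' (by omega) _ _ hp0
      have hyb : y ≠ b := fresh (i' + 1 + 1) (by omega) _ _ hxy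
      rcases hdeg a p y b hAap hAxy hAab with h | h | h
      · exact hpy h
      · exact hpb h
      · exact hyb h

include hsym hne hdeg hs in
lemma chain_inj {i j : ℕ} {p q a : V} (hi : ch A s i = some (p, a))
    (hj : ch A s j = some (q, a)) : i = j := by
  rcases lt_trichotomy i j with h | h | h
  · exact absurd rfl (chain_key hsym hne hdeg hs j i h _ _ _ _ hi hj).1
  · exact h
  · exact absurd rfl (chain_key hsym hne hdeg hs i j h _ _ _ _ hj hi).1

include hsym hne hdeg hs in
lemma chain_chord {i j : ℕ} {p q a b : V} (hi : ch A s i = some (p, a))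
    (hj : ch A s j = some (q, b)) (hab : A a b) : i + 1 = j ∨ j + 1 = i := by
  rcases lt_trichotomy i j with h | h | h
  · exact Or.inl ((chain_key hsym hne hdeg hs j i h _ _ _ _ hi hj).2 hab)
  · subst h
    rw [hi] at hj
    exact absurd (some_pair_eq hj).2 (hne _ _ hab)
  · exact Or.inr ((chain_key hsym hne hdeg hs i j h _ _ _ _ hj hi).2 (hsym _ _ hab))

include hsym hne hdeg hs in
lemma chain_last : ∃ K, ch A s K ≠ none ∧ ch A s (K + 1) = none := by
  have hstop : ∃ k, ch A s k = none := by
    by_contra hall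
    push_neg at hall
    have hf : ∀ k, ∃ pc, ch A s k = some pc := by
      intro k
      rcases hx : ch A s k with _ | pc
      · exact absurd hx (hall k)
      · exact ⟨pc, rfl⟩
    choose f hf using hf
    have hinj : Function.Injective (fun i : Fin (Fintype.card V + 1) => (f (i : ℕ)).2) := by
      intro i j hij
      have h1 : ch A s (i : ℕ) = some ((f (i : ℕ)).1, (f (i : ℕ)).2) := by
        rw [← hf (i : ℕ)]
      have h2 : ch A s (j : ℕ) = some ((f (j : ℕ)).1, (f (j : ℕ)).2) := by
        rw [← hf (j : ℕ)]
      rw [show (f (i : ℕ)).2 = (f (j : ℕ)).2 from hij] at h1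
      exact Fin.ext (chain_inj hsym hne hdeg hs h1 h2)
    have := Fintype.card_le_of_injective _ hinj
    simp [Fintype.card_fin] at this
  have h0 : ch A s 0 ≠ none := by rw [ch_zero]; exact fun hcon => by cases hcon
  have hfind1 : 1 ≤ Nat.find hstop := by
    by_contra hcon
    push_neg at hcon
    interval_cases h : Nat.find hstop
    · exact h0 (h ▸ Nat.find_spec hstop)
  refine ⟨Nat.find hstop - 1, ?_, ?_⟩
  · exact fun hcon => absurd hcon (Nat.find_min hstop (by omega))
  · have : Nat.find hstop - 1 + 1 = Nat.find hstop := by omega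
    rw [this]
    exact Nat.find_spec hstop

include hsym hne hdeg hs in
lemma chain_closed {x y : V} {k : ℕ} {p : V} (hk : ch A s k = some (p, x))
    (hxy : A x y) : ∃ j q, ch A s j = some (q, y) := by
  rcases hnext : ch A s (k + 1) with _ | ⟨p2, c2⟩
  · -- the chain stops here: every neighbor of x is p
    have hyp : y = p := ch_succ_none A hk hnext y hxy
    rcases Nat.eq_zero_or_pos k with rfl | hpos
    · rw [ch_zero] at hk
      obtain ⟨rfl, rfl⟩ := some_pair_eq hk
      exact absurd hyp.symm (hne _ _ hxy)
    · obtain ⟨k', rfl⟩ : ∃ k', k = k' + 1 := ⟨k - 1, by omega⟩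
      obtain ⟨q', hq', _, _⟩ := ch_succ_some A hk
      exact ⟨k', q', hyp ▸ hq'⟩
  · obtain ⟨q', hq', hAc, hc2q⟩ := ch_succ_some A hnext
    rw [hk] at hq'
    obtain ⟨rfl, rfl⟩ := some_pair_eq hq'
    -- now hAc : A p2 c2 with p2 = x renamed; careful with names
    rcases Nat.eq_zero_or_pos k with rfl | hpos
    · rw [ch_zero] at hk
      obtain ⟨rfl, rfl⟩ := some_pair_eq hk
      have : y = c2 := hs _ _ hxy hAc
      exact ⟨1, _, this ▸ hnext⟩
    · obtain ⟨k', rfl⟩ : ∃ k', k = k' + 1 := ⟨k - 1, by omega⟩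
      obtain ⟨q3, hq3, hApx, hxq3⟩ := ch_succ_some A hk
      have hAxp : A x p := hsym _ _ hApx
      rcases hdeg x p c2 y hAxp hAc hxy with h | h | h
      · -- p at k', c2 at k+1 : contradiction via chain_key
        exfalso
        have h1 : ch A s k' = some (q3, p) := hq3
        have := (chain_key hsym hne hdeg hs (k' + 1 + 1) k' (by omega) _ _ _ _ h1 hnext).1
        exact this h
      · exact ⟨k', q3, h ▸ hq3⟩
      · exact ⟨k' + 1 + 1, x, h ▸ hnext⟩

include hsym hne hdeg hs in
lemma chain_of_reach {x : V} (h : Relation.ReflTransGen A s x) :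
    ∃ k p, ch A s k = some (p, x) := by
  induction h with
  | refl => exact ⟨0, s, ch_zero A s⟩
  | tail hab hbc ih =>
    obtain ⟨k, p, hk⟩ := ih
    exact chain_closed hsym hne hdeg hs hk hbc

lemma reach_of_chain {x : V} {k : ℕ} {p : V} (hk : ch A s k = some (p, x)) :
    Relation.ReflTransGen A s x := by
  induction k generalizing p x with
  | zero =>
    rw [ch_zero] at hk
    obtain ⟨rfl, rfl⟩ := some_pair_eq hk
    exact Relation.ReflTransGen.refl
  | succ k ih =>
    obtain ⟨q, hq, hA, _⟩ := ch_succ_some A hk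
    exact Relation.ReflTransGen.tail (ih hq) hA

include hsym in
/-- if `t ≠ s` has degree ≤ 1 and lies on the chain, the chain stops at `t`. -/
lemma chain_stop {t : V} (ht : ∀ x y, A t x → A t y → x = y) (hts : t ≠ s)
    {k : ℕ} {p : V} (hk : ch A s k = some (p, t)) : ch A s (k + 1) = none := by
  rcases hnext : ch A s (k + 1) with _ | ⟨p2, c2⟩
  · rfl
  · exfalso
    obtain ⟨q', hq', hAc, hc2q⟩ := ch_succ_some A hnext
    rw [hk] at hq'
    obtain ⟨rfl, rfl⟩ := some_pair_eq hq'
    rcases Nat.eq_zero_or_pos k with rfl | hpos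
    · rw [ch_zero] at hk
      exact hts (some_pair_eq hk).2.symm
    · obtain ⟨k', rfl⟩ : ∃ k', k = k' + 1 := ⟨k - 1, by omega⟩
      obtain ⟨q3, hq3, hApx, hxq3⟩ := ch_succ_some A hk
      have hAtp : A t p := hsym _ _ hApx
      exact hc2q (ht _ _ hAc hAtp)

end Key

end Chain

end Stmt8Aux

theorem stmt8 (n : ℕ) (hn : 4 ≤ n) (g : Fin n → Fin n → Option Bool)
    (hloop : ∀ u, g u u = none)
    (hconn : (underGraph g).Connected)
    (hdeg : ∀ v : Fin n, (Finset.univ.filter (fun u => IsNeighbor g v u)).card ≤ 2)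
    (hss : ∀ u v, ¬ (g u v = some true ∧ g v u = some false))
    (r : ℕ) (hr : r = 1 ∨ r = 2)
    (u w : Fin n) (huw : u ≠ w)
    -- exactly `r` negative edges, all incident to the pair `{u, w}`
    (hneg : (Finset.univ.filter
        (fun p : Fin n × Fin n => g p.1 p.2 = some false)).card = r)
    (hinc : ∀ a b : Fin n, g a b = some false → (a = u ∧ b = w) ∨ (a = w ∧ b = u)) :
    ∃ ℓ : Fin n ≃ Fin n, (ℓ u : ℕ) = 0 ∧ (ℓ w : ℕ) = n - 1 ∧
      ∀ a b : Fin n, g a b ≠ none →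
        (((ℓ a : ℕ) + 1 = (ℓ b : ℕ) ∨ (ℓ b : ℕ) + 1 = (ℓ a : ℕ)) ∧ g a b = some true) ∨
        ((((ℓ a : ℕ) = 0 ∧ (ℓ b : ℕ) = n - 1) ∨ ((ℓ b : ℕ) = 0 ∧ (ℓ a : ℕ) = n - 1)) ∧
          g a b = some false) := by
  classical
  open Stmt8Aux in
  set A : Fin n → Fin n → Prop :=
    fun a b => IsNeighbor g a b ∧ ¬(a = u ∧ b = w) ∧ ¬(a = w ∧ b = u) with hA
  have destA : ∀ a b, A a b →
      IsNeighbor g a b ∧ ¬(a = u ∧ b = w) ∧ ¬(a = w ∧ b = u) := by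
    intro a b h; rw [hA] at h; exact h
  have mkA : ∀ a b, IsNeighbor g a b → ¬((a = u ∧ b = w) ∨ (a = w ∧ b = u)) → A a b := by
    intro a b h hnp
    rw [hA]
    exact ⟨h, fun h1 => hnp (Or.inl h1), fun h2 => hnp (Or.inr h2)⟩
  have hAsym : ∀ a b, A a b → A b a := by
    intro a b h
    obtain ⟨⟨hab, hor⟩, h1, h2⟩ := destA a b h
    rw [hA]
    exact ⟨⟨hab.symm, hor.symm⟩, fun hc => h2 ⟨hc.2, hc.1⟩, fun hc => h1 ⟨hc.2, hc.1⟩⟩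
  have hAne : ∀ a b, A a b → a ≠ b := fun a b h => (destA a b h).1.1
  have hr1 : 1 ≤ r := by rcases hr with rfl | rfl <;> norm_num
  have hedge : g u w = some false ∨ g w u = some false := by
    have hpos : 0 < (Finset.univ.filter
        (fun p : Fin n × Fin n => g p.1 p.2 = some false)).card := by omega
    obtain ⟨⟨a, b⟩, hab⟩ := Finset.card_pos.mp hpos
    rw [Finset.mem_filter] at hab
    rcases hinc a b hab.2 with ⟨rfl, rfl⟩ | ⟨rfl, rfl⟩
    · exact Or.inl hab.2
    · exact Or.inr hab.2
  have hIuw : IsNeighbor g u w := by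
    refine ⟨huw, ?_⟩
    rcases hedge with h | h
    · exact Or.inl (by rw [h]; exact fun c => by cases c)
    · exact Or.inr (by rw [h]; exact fun c => by cases c)
  have hIN3 : ∀ v x y z, IsNeighbor g v x → IsNeighbor g v y → IsNeighbor g v z →
      x = y ∨ x = z ∨ y = z := by
    intro v x y z hx hy hz
    by_contra hcon
    push_neg at hcon
    obtain ⟨hxy, hxz, hyz⟩ := hcon
    have hsub : ({x, y, z} : Finset (Fin n)) ⊆
        Finset.univ.filter (fun t => IsNeighbor g v t) := by
      intro t ht
      simp only [Finset.mem_insert, Finset.mem_singleton] at ht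
      simp only [Finset.mem_filter, Finset.mem_univ, true_and]
      rcases ht with rfl | rfl | rfl <;> assumption
    have h3 : ({x, y, z} : Finset (Fin n)).card = 3 := by
      rw [Finset.card_insert_of_notMem (by simp [hxy, hxz]),
        Finset.card_insert_of_notMem (by simp [hyz]), Finset.card_singleton]
    have hle := Finset.card_le_card hsub
    have := hdeg v
    omega
  have hdeg3 : ∀ v x y z, A v x → A v y → A v z → x = y ∨ x = z ∨ y = z :=
    fun v x y z hx hy hz =>
      hIN3 v x y z (destA _ _ hx).1 (destA _ _ hy).1 (destA _ _ hz).1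
  have hdeg1u : ∀ x y, A u x → A u y → x = y := by
    intro x y hx hy
    by_contra hxy
    have hxw : x ≠ w := fun h => (destA _ _ hx).2.1 ⟨rfl, h⟩
    have hyw : y ≠ w := fun h => (destA _ _ hy).2.1 ⟨rfl, h⟩
    rcases hIN3 u x y w (destA _ _ hx).1 (destA _ _ hy).1 hIuw with h | h | h
    · exact hxy h
    · exact hxw h
    · exact hyw h
  have hIwu : IsNeighbor g w u := ⟨huw.symm, hIuw.2.symm⟩
  have hdeg1w : ∀ x y, A w x → A w y → x = y := by
    intro x y hx hy
    by_contra hxy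
    have hxu : x ≠ u := fun h => (destA _ _ hx).2.2 ⟨rfl, h⟩
    have hyu : y ≠ u := fun h => (destA _ _ hy).2.2 ⟨rfl, h⟩
    rcases hIN3 w x y u (destA _ _ hx).1 (destA _ _ hy).1 hIwu with h | h | h
    · exact hxy h
    · exact hxu h
    · exact hyu h
  have hposSign : ∀ a b, g a b ≠ none → ¬((a = u ∧ b = w) ∨ (a = w ∧ b = u)) →
      g a b = some true := by
    intro a b hnn hnp
    rcases hg : g a b with _ | bb
    · exact absurd hg hnn
    · cases bb
      · exact absurd (hinc a b hg) hnp
      · rfl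
  have hnegSign : ∀ a b, ((a = u ∧ b = w) ∨ (a = w ∧ b = u)) → g a b ≠ none →
      g a b = some false := by
    intro a b hp hnn
    rcases hg : g a b with _ | bb
    · exact absurd hg hnn
    · cases bb
      · rfl
      · exfalso
        have huwf : g u w ≠ some false ∧ g w u ≠ some false := by
          rcases hp with ⟨rfl, rfl⟩ | ⟨rfl, rfl⟩
          · exact ⟨(by rw [hg]; exact fun c => by cases c), fun hf => hss a b ⟨hg, hf⟩⟩
          · exact ⟨fun hf => hss a b ⟨hg, hf⟩, (by rw [hg]; exact fun c => by cases c)⟩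
        have hempty : (Finset.univ.filter
            (fun p : Fin n × Fin n => g p.1 p.2 = some false)) = ∅ := by
          rw [Finset.eq_empty_iff_forall_notMem]
          rintro ⟨c, d⟩ hcd
          rw [Finset.mem_filter] at hcd
          rcases hinc c d hcd.2 with ⟨rfl, rfl⟩ | ⟨rfl, rfl⟩
          · exact huwf.1 hcd.2
          · exact huwf.2 hcd.2
        rw [hempty] at hneg
        simp at hneg
        omega
  have hreach : ∀ x y : Fin n, Relation.ReflTransGen (fun a b => IsNeighbor g a b) x y := by
    intro x y
    have h := hconn.preconnected x y
    rw [SimpleGraph.reachable_iff_reflTransGen] at h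
    refine Relation.ReflTransGen.mono ?_ x y h
    intro a b hab
    rw [underGraph, SimpleGraph.fromRel_adj] at hab
    exact hab
  have cover : ∀ v, (∃ k p, ch A u k = some (p, v)) ∨ (∃ k p, ch A w k = some (p, v)) := by
    intro v
    have h := hreach u v
    induction h with
    | refl => exact Or.inl ⟨0, u, ch_zero A u⟩
    | @tail x y hux hxy ih =>
      by_cases hp : (x = u ∧ y = w) ∨ (x = w ∧ y = u)
      · rcases hp with ⟨hx, hy⟩ | ⟨hx, hy⟩
        · rw [hy]; exact Or.inr ⟨0, w, ch_zero A w⟩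
        · rw [hy]; exact Or.inl ⟨0, u, ch_zero A u⟩
      · have hAxy : A x y := mkA x y hxy hp
        rcases ih with ⟨k, p, hk⟩ | ⟨k, p, hk⟩
        · exact Or.inl (chain_closed hAsym hAne hdeg3 hdeg1u hk hAxy)
        · exact Or.inr (chain_closed hAsym hAne hdeg3 hdeg1w hk hAxy)
  by_cases hwU : ∃ k p, ch A u k = some (p, w)
  · -- cycle case : the chain from u ends at w and covers everything
    obtain ⟨t, pt, hwt⟩ := hwU
    have hstopw : ch A u (t + 1) = none := chain_stop hAsym hdeg1w (Ne.symm huw) hwt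
    have allU : ∀ v, ∃ k p, ch A u k = some (p, v) := by
      intro v
      rcases cover v with h | h
      · exact h
      · obtain ⟨k, p, hk⟩ := h
        have h1 : Relation.ReflTransGen A u w := reach_of_chain hwt
        have h2 : Relation.ReflTransGen A w v := reach_of_chain hk
        exact chain_of_reach hAsym hAne hdeg3 hdeg1u (h1.trans h2)
    choose F P hF using allU
    have hFle : ∀ v, F v ≤ t := by
      intro v
      by_contra hgt
      push_neg at hgt
      have hne' : ch A u (F v) ≠ none := by rw [hF v]; exact fun c => by cases c
      exact ch_isSome_mono A (show t + 1 ≤ F v by omega) hne' hstopw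
    have hchsome : ∀ k : Fin (t + 1), ∃ p c : Fin n, ch A u (k : ℕ) = some (p, c) := by
      intro k
      have hne' : ch A u t ≠ none := by rw [hwt]; exact fun c => by cases c
      have hsome := ch_isSome_mono A (show (k : ℕ) ≤ t by omega) hne'
      rcases hx : ch A u (k : ℕ) with _ | ⟨p, c⟩
      · exact absurd hx hsome
      · exact ⟨p, c, rfl⟩
    choose vfp vfc hvf using hchsome
    have hvinj : Function.Injective vfc := by
      intro i j hij
      have h1 := hvf i
      have h2 := hvf j
      rw [hij] at h1
      exact Fin.ext (chain_inj hAsym hAne hdeg3 hdeg1u h1 h2)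
    have hn2 : n ≤ t + 1 := by
      have hinj2 : Function.Injective
          (fun v : Fin n => (⟨F v, by have := hFle v; omega⟩ : Fin (t + 1))) := by
        intro a b hab
        have hFab : F a = F b := congrArg Fin.val hab
        have h1 := hF a
        rw [hFab, hF b] at h1
        exact (some_pair_eq h1).2.symm
      simpa using Fintype.card_le_of_injective _ hinj2
    have hn1 : t + 1 ≤ n := by simpa using Fintype.card_le_of_injective _ hvinj
    have htn : t = n - 1 := by omega
    have hFn : ∀ v, F v < n := fun v => by have := hFle v; omega
    have hlabinj : Function.Injective (fun v : Fin n => (⟨F v, hFn v⟩ : Fin n)) := by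
      intro a b hab
      have hFab : F a = F b := congrArg Fin.val hab
      have h1 := hF a
      rw [hFab, hF b] at h1
      exact (some_pair_eq h1).2.symm
    have hbij := Finite.injective_iff_bijective.mp hlabinj
    have hlu : F u = 0 := chain_inj hAsym hAne hdeg3 hdeg1u (hF u) (ch_zero A u)
    have hlw : F w = n - 1 := htn ▸ chain_inj hAsym hAne hdeg3 hdeg1u (hF w) hwt
    refine ⟨Equiv.ofBijective _ hbij, hlu, hlw, ?_⟩
    intro a b hgab
    have hab : a ≠ b := by rintro rfl; exact hgab (hloop a)
    have hIN : IsNeighbor g a b := ⟨hab, Or.inl hgab⟩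
    by_cases hp : (a = u ∧ b = w) ∨ (a = w ∧ b = u)
    · right
      refine ⟨?_, hnegSign a b hp hgab⟩
      rcases hp with ⟨rfl, rfl⟩ | ⟨rfl, rfl⟩
      · exact Or.inl ⟨hlu, hlw⟩
      · exact Or.inr ⟨hlu, hlw⟩
    · left
      refine ⟨?_, hposSign a b hgab hp⟩
      exact chain_chord hAsym hAne hdeg3 hdeg1u (hF a) (hF b) (mkA a b hIN hp)
  · -- path case : two disjoint chains from u and from w
    have hdisj : ∀ v, (∃ k p, ch A u k = some (p, v)) →
        (∃ k p, ch A w k = some (p, v)) → False := by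
      rintro v ⟨k, p, hk⟩ ⟨j, q, hj⟩
      have h1 : Relation.ReflTransGen A u v := reach_of_chain hk
      have h2 : Relation.ReflTransGen A w v := reach_of_chain hj
      have hsymA : Symmetric A := fun a b h => hAsym a b h
      have h3 : Relation.ReflTransGen A v w := by
        haveI : Std.Symm A := ⟨fun a b h => hsymA h⟩
        exact symm h2
      exact hwU (chain_of_reach hAsym hAne hdeg3 hdeg1u (h1.trans h3))
    obtain ⟨Ku, hKu, hKu1⟩ := chain_last hAsym hAne hdeg3 hdeg1u
    obtain ⟨Kw, hKw, hKw1⟩ := chain_last hAsym hAne hdeg3 hdeg1w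
    have hleU : ∀ k (p c : Fin n), ch A u k = some (p, c) → k ≤ Ku := by
      intro k p c hk
      by_contra hgt
      push_neg at hgt
      have hne' : ch A u k ≠ none := by rw [hk]; exact fun hc => by cases hc
      exact ch_isSome_mono A (show Ku + 1 ≤ k by omega) hne' hKu1
    have hleW : ∀ k (p c : Fin n), ch A w k = some (p, c) → k ≤ Kw := by
      intro k p c hk
      by_contra hgt
      push_neg at hgt
      have hne' : ch A w k ≠ none := by rw [hk]; exact fun hc => by cases hc
      exact ch_isSome_mono A (show Kw + 1 ≤ k by omega) hne' hKw1
    -- vertex functions along each chain, for counting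
    have hchU : ∀ k : Fin (Ku + 1), ∃ p c : Fin n, ch A u (k : ℕ) = some (p, c) := by
      intro k
      have hsome := ch_isSome_mono A (show (k : ℕ) ≤ Ku by omega) hKu
      rcases hx : ch A u (k : ℕ) with _ | ⟨p, c⟩
      · exact absurd hx hsome
      · exact ⟨p, c, rfl⟩
    have hchW : ∀ k : Fin (Kw + 1), ∃ p c : Fin n, ch A w (k : ℕ) = some (p, c) := by
      intro k
      have hsome := ch_isSome_mono A (show (k : ℕ) ≤ Kw by omega) hKw
      rcases hx : ch A w (k : ℕ) with _ | ⟨p, c⟩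
      · exact absurd hx hsome
      · exact ⟨p, c, rfl⟩
    choose vfUp vfUc hvfU using hchU
    choose vfWp vfWc hvfW using hchW
    have hsuminj : Function.Injective (Sum.elim vfUc vfWc) := by
      intro x y hxy
      match x, y with
      | Sum.inl i, Sum.inl j =>
        simp only [Sum.elim_inl] at hxy
        have h1 := hvfU i
        rw [hxy] at h1
        exact congrArg Sum.inl (Fin.ext (chain_inj hAsym hAne hdeg3 hdeg1u h1 (hvfU j)))
      | Sum.inl i, Sum.inr j =>
        simp only [Sum.elim_inl, Sum.elim_inr] at hxy
        exact absurd (hxy ▸ hvfW j)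
          (fun hc => hdisj (vfUc i) ⟨i, vfUp i, hvfU i⟩ ⟨j, vfWp j, hc⟩)
      | Sum.inr i, Sum.inl j =>
        simp only [Sum.elim_inl, Sum.elim_inr] at hxy
        exact absurd (hxy ▸ hvfU j)
          (fun hc => hdisj (vfWc i) ⟨j, vfUp j, hc⟩ ⟨i, vfWp i, hvfW i⟩)
      | Sum.inr i, Sum.inr j =>
        simp only [Sum.elim_inr] at hxy
        have h1 := hvfW i
        rw [hxy] at h1
        exact congrArg Sum.inr (Fin.ext (chain_inj hAsym hAne hdeg3 hdeg1w h1 (hvfW j)))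
    have hcnt : Ku + 1 + (Kw + 1) ≤ n := by
      simpa [Fintype.card_sum] using Fintype.card_le_of_injective _ hsuminj
    -- selection of a chain position for each vertex
    have hsel : ∀ v, ∃ kpb : ℕ × Fin n × Bool,
        (kpb.2.2 = true ∧ ch A u kpb.1 = some (kpb.2.1, v)) ∨
        (kpb.2.2 = false ∧ ch A w kpb.1 = some (kpb.2.1, v)) := by
      intro v
      rcases cover v with ⟨k, p, hk⟩ | ⟨k, p, hk⟩
      · exact ⟨(k, p, true), Or.inl ⟨rfl, hk⟩⟩
      · exact ⟨(k, p, false), Or.inr ⟨rfl, hk⟩⟩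
    choose F hF using hsel
    have hFu : ∀ v, (F v).2.2 = true → ch A u (F v).1 = some ((F v).2.1, v) := by
      intro v hb
      rcases hF v with ⟨_, h⟩ | ⟨hb', _⟩
      · exact h
      · rw [hb] at hb'; cases hb'
    have hFw : ∀ v, (F v).2.2 = false → ch A w (F v).1 = some ((F v).2.1, v) := by
      intro v hb
      rcases hF v with ⟨hb', _⟩ | ⟨_, h⟩
      · rw [hb] at hb'; cases hb'
      · exact h
    have hflag : ∀ v, (F v).2.2 = true ∨ (F v).2.2 = false := by
      intro v
      cases hx : (F v).2.2
      · exact Or.inr rfl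
      · exact Or.inl rfl
    have hbU : ∀ v, (F v).2.2 = true → (F v).1 ≤ Ku := fun v hb => hleU _ _ _ (hFu v hb)
    have hbW : ∀ v, (F v).2.2 = false → (F v).1 ≤ Kw := fun v hb => hleW _ _ _ (hFw v hb)
    set lab : Fin n → ℕ :=
      fun v => if (F v).2.2 = true then (F v).1 else n - 1 - (F v).1 with hlabdef
    have hlabU : ∀ v, (F v).2.2 = true → lab v = (F v).1 := by
      intro v h
      show (if (F v).2.2 = true then (F v).1 else n - 1 - (F v).1) = (F v).1
      rw [if_pos h]
    have hlabW : ∀ v, (F v).2.2 = false → lab v = n - 1 - (F v).1 := by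
      intro v h
      show (if (F v).2.2 = true then (F v).1 else n - 1 - (F v).1) = n - 1 - (F v).1
      rw [if_neg (by rw [h]; exact fun hc => by cases hc)]
    have hlablt : ∀ v, lab v < n := by
      intro v
      rcases hflag v with h | h
      · rw [hlabU v h]; have := hbU v h; omega
      · rw [hlabW v h]; omega
    have hlabinj : ∀ a b : Fin n, lab a = lab b → a = b := by
      intro a b hab
      rcases hflag a with ha | ha <;> rcases hflag b with hb | hb
      · rw [hlabU a ha, hlabU b hb] at hab
        have h1 := hFu a ha
        rw [hab, hFu b hb] at h1
        exact (some_pair_eq h1).2.symm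
      · exfalso
        rw [hlabU a ha, hlabW b hb] at hab
        have h1 := hbU a ha
        have h2 := hbW b hb
        omega
      · exfalso
        rw [hlabW a ha, hlabU b hb] at hab
        have h1 := hbW a ha
        have h2 := hbU b hb
        omega
      · rw [hlabW a ha, hlabW b hb] at hab
        have h1 := hbW a ha
        have h2 := hbW b hb
        have h3 : (F a).1 = (F b).1 := by omega
        have h4 := hFw a ha
        rw [h3, hFw b hb] at h4
        exact (some_pair_eq h4).2.symm
    have hinjF : Function.Injective (fun v : Fin n => (⟨lab v, hlablt v⟩ : Fin n)) :=
      fun a b hab => hlabinj a b (congrArg Fin.val hab)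
    have hbij := Finite.injective_iff_bijective.mp hinjF
    have hlu : lab u = 0 := by
      rcases hflag u with h | h
      · rw [hlabU u h]
        exact chain_inj hAsym hAne hdeg3 hdeg1u (hFu u h) (ch_zero A u)
      · exact absurd ⟨(F u).1, (F u).2.1, hFw u h⟩
          (fun hc => hdisj u ⟨0, u, ch_zero A u⟩ hc)
    have hlw : lab w = n - 1 := by
      rcases hflag w with h | h
      · exact absurd ⟨(F w).1, (F w).2.1, hFu w h⟩ hwU
      · rw [hlabW w h,
          chain_inj hAsym hAne hdeg3 hdeg1w (hFw w h) (ch_zero A w)]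
        omega
    refine ⟨Equiv.ofBijective _ hbij, hlu, hlw, ?_⟩
    intro a b hgab
    have hab : a ≠ b := by rintro rfl; exact hgab (hloop a)
    have hIN : IsNeighbor g a b := ⟨hab, Or.inl hgab⟩
    by_cases hp : (a = u ∧ b = w) ∨ (a = w ∧ b = u)
    · right
      refine ⟨?_, hnegSign a b hp hgab⟩
      rcases hp with ⟨rfl, rfl⟩ | ⟨rfl, rfl⟩
      · exact Or.inl ⟨hlu, hlw⟩
      · exact Or.inr ⟨hlu, hlw⟩
    · left
      refine ⟨?_, hposSign a b hgab hp⟩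
      have hAab : A a b := mkA a b hIN hp
      show lab a + 1 = lab b ∨ lab b + 1 = lab a
      rcases hflag a with hfa | hfa
      · have hfb : (F b).2.2 = true := by
          rcases hflag b with h | h
          · exact h
          · exfalso
            obtain ⟨j, q, hj⟩ := chain_closed hAsym hAne hdeg3 hdeg1u (hFu a hfa) hAab
            exact hdisj b ⟨j, q, hj⟩ ⟨(F b).1, (F b).2.1, hFw b h⟩
        rw [hlabU a hfa, hlabU b hfb]
        exact chain_chord hAsym hAne hdeg3 hdeg1u (hFu a hfa) (hFu b hfb) hAab
      · have hfb : (F b).2.2 = false := by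
          rcases hflag b with h | h
          · exfalso
            obtain ⟨j, q, hj⟩ :=
              chain_closed hAsym hAne hdeg3 hdeg1u (hFu b h) (hAsym a b hAab)
            exact hdisj a ⟨j, q, hj⟩ ⟨(F a).1, (F a).2.1, hFw a hfa⟩
          · exact h
        rw [hlabW a hfa, hlabW b hfb]
        have hc := chain_chord hAsym hAne hdeg3 hdeg1w (hFw a hfa) (hFw b hfb) hAab
        have h1 := hbW a hfa
        have h2 := hbW b hfb
        rcases hc with hc | hc
        · right; omega
        · left; omega
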